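/- Let L ⊆ A* be an automatic structure for π : A* → G admitting a departure function. For every p > 0 there exists q > 0 such that: whenever u₁,u₂,u₃ ∈ L are such that the concatenation u₁u₂ and u₃ are p-meeting-fellow-travellers, then for all u'₁,u'₂,u'₃ ∈ L with u'ᵢπ = uᵢπ for i = 1,2,3, the inequality d_A((u'₁u'₂)^[n]π, u'₃^[n]π) ≤ q holds for all n ∈ ℕ. -/

import Mathlib

open scoped NNReal

namespace Auto

/-- The generating set `Aπ ∪ (Aπ)⁻¹` of `G` determined by `π : A* → G`. -/
def gens {A G : Type*} [Group G] (π : FreeMonoid A →* G) : Set G :=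
  (Set.range fun a : A => π (FreeMonoid.of a)) ∪
    Set.range fun a : A => (π (FreeMonoid.of a))⁻¹

/-- The word metric `d_A` on `G`: the least `n` such that `g⁻¹h` is a product of `n`
elements of `Aπ ∪ (Aπ)⁻¹`. -/
noncomputable def wdist {A G : Type*} [Group G] (π : FreeMonoid A →* G) (g h : G) : ℕ :=
  sInf {n : ℕ | ∃ l : List G, l.length = n ∧ (∀ x ∈ l, x ∈ gens π) ∧ l.prod = g⁻¹ * h}

/-- Evaluation of a word of `A*` in `G`. -/
def evalW {A G : Type*} [Group G] (π : FreeMonoid A →* G) (w : List A) : G :=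
  π (FreeMonoid.ofList w)

/-- `u` and `v` `p`-fellow travel: `d_A(u^[n]π, v^[n]π) ≤ p` for all `n`. -/
def FellowTravel {A G : Type*} [Group G] (π : FreeMonoid A →* G) (p : ℝ≥0)
    (u v : List A) : Prop :=
  ∀ n : ℕ, (wdist π (evalW π (u.take n)) (evalW π (v.take n)) : ℝ≥0) ≤ p

/-- `u` and `v` are `p`-meeting-fellow-travellers. -/
def MFT {A G : Type*} [Group G] (π : FreeMonoid A →* G) (p : ℝ≥0) (u v : List A) : Prop :=
  FellowTravel π p u v ∧ evalW π u = evalW π v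

/-- A language is regular if it is accepted by a finite-state automaton. -/
def IsRegular {A : Type*} (L : Language A) : Prop :=
  ∃ (σ : Type) (_ : Fintype σ) (M : DFA A σ), M.accepts = L

/-- `L` is an automatic structure for `π`. -/
structure IsAutomaticStructure {A G : Type*} [Group G] (π : FreeMonoid A →* G)
    (L : Language A) : Prop where
  regular : IsRegular L
  onto : ∀ g : G, ∃ w ∈ L, evalW π w = g
  ft : ∃ N : ℕ, ∀ u ∈ L, ∀ v ∈ L,
    wdist π (evalW π u) (evalW π v) ≤ 1 → FellowTravel π N u v

/-- Evaluation of an element of `A ∪ {ε}`. -/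
def evalOpt {A G : Type*} [Group G] (π : FreeMonoid A →* G) : Option A → G
  | none => 1
  | some a => π (FreeMonoid.of a)

/-- `L` is a biautomatic structure for `π`. -/
structure IsBiautomaticStructure {A G : Type*} [Group G] (π : FreeMonoid A →* G)
    (L : Language A) extends IsAutomaticStructure π L : Prop where
  bi : ∃ N : ℕ, ∀ u ∈ L, ∀ v ∈ L, ∀ a : Option A,
    evalW π v = evalOpt π a * evalW π u →
    ∀ n : ℕ, wdist π (evalOpt π a * evalW π (u.take n)) (evalW π (v.take n)) ≤ N

/-- A language is factorial if it is closed under taking factors. -/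
def IsFactorial {A : Type*} (L : Language A) : Prop :=
  ∀ u ∈ L, ∀ v : List A, v <:+: u → v ∈ L

/-- `D : ℝ≥0 → ℝ≥0` is a departure function for `(G, L)`. -/
def IsDepartureFunction {A G : Type*} [Group G] (π : FreeMonoid A →* G) (L : Language A)
    (D : ℝ≥0 → ℝ≥0) : Prop :=
  ∀ w ∈ L, ∀ r : ℝ≥0, ∀ s t : ℕ, D r ≤ (t : ℝ≥0) → s + t ≤ w.length →
    r < (wdist π (evalW π (w.take s)) (evalW π (w.take (s + t))) : ℝ≥0)

/-- Every point of `S` is within distance `N` of `T`. -/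
def NbhdIn {A G : Type*} [Group G] (π : FreeMonoid A →* G) (N : ℕ) (S T : Set G) : Prop :=
  ∀ s ∈ S, ∃ t ∈ T, wdist π s t ≤ N

/-- The Hausdorff distance between `S` and `T` is at most `N`. -/
def HausdorffLE {A G : Type*} [Group G] (π : FreeMonoid A →* G) (N : ℕ)
    (S T : Set G) : Prop :=
  NbhdIn π N S T ∧ NbhdIn π N T S

/-- `H` is an `L`-quasiconvex subgroup of `G`. -/
def IsQuasiconvex {A G : Type*} [Group G] (π : FreeMonoid A →* G) (L : Language A)
    (H : Subgroup G) : Prop :=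
  ∃ k : ℕ, ∀ h ∈ H, ∀ h' ∈ H, ∀ w ∈ L, h * evalW π w = h' →
    ∀ n : ℕ, ∃ z ∈ H, wdist π (h * evalW π (w.take n)) z ≤ k

/-- The bounded reduction property for `(φ, L, L')`. -/
def BRP {A B G G' : Type*} [Group G] [Group G'] (π : FreeMonoid A →* G)
    (π' : FreeMonoid B →* G') (φ : G →* G') (L : Language A) (L' : Language B) : Prop :=
  ∃ N : ℕ, ∀ x : G, ∀ α ∈ L, ∀ β ∈ L', evalW π' β = φ (evalW π α) →
    HausdorffLE π' N (Set.range fun n : ℕ => φ (x * evalW π (α.take n)))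
      (Set.range fun n : ℕ => φ x * evalW π' (β.take n))

/-- The synchronous bounded reduction property for `(φ, L, L')`. -/
def SyncBRP {A B G G' : Type*} [Group G] [Group G'] (π : FreeMonoid A →* G)
    (π' : FreeMonoid B →* G') (φ : G →* G') (L : Language A) (L' : Language B) : Prop :=
  ∃ N : ℕ, ∀ x : G, ∀ α ∈ L, ∀ β ∈ L', evalW π' β = φ (evalW π α) →
    ∀ n : ℕ, wdist π' (φ (x * evalW π (α.take n))) (φ x * evalW π' (β.take n)) ≤ N

/-- The fellow traveller bounded reduction property (FT-BRP) for `(φ, L, L')`. -/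
def FTBRP {A B G G' : Type*} [Group G] [Group G'] (π : FreeMonoid A →* G)
    (π' : FreeMonoid B →* G') (φ : G →* G') (L : Language A) (L' : Language B) : Prop :=
  ∀ p : ℝ≥0, ∃ q : ℝ≥0,
    ∀ u₁ ∈ L, ∀ u₂ ∈ L, ∀ u₃ ∈ L, ∀ u₁' ∈ L', ∀ u₂' ∈ L', ∀ u₃' ∈ L',
      evalW π' u₁' = φ (evalW π u₁) → evalW π' u₂' = φ (evalW π u₂) →
        evalW π' u₃' = φ (evalW π u₃) →
          MFT π p (u₁ ++ u₂) u₃ → MFT π' q (u₁' ++ u₂') u₃'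

/-- The natural homomorphism `(A ⊔ B)* → G` agreeing with `π₁` on `A` and `π₂` on `B`. -/
def sumHom {A B G : Type*} [Group G] (π₁ : FreeMonoid A →* G) (π₂ : FreeMonoid B →* G) :
    FreeMonoid (A ⊕ B) →* G :=
  FreeMonoid.lift (Sum.elim (fun a => π₁ (FreeMonoid.of a)) fun b => π₂ (FreeMonoid.of b))

/-- The union `L₁ ∪ L₂` viewed as a language over `A ⊔ B`. -/
def unionLang {A B : Type*} (L₁ : Language A) (L₂ : Language B) : Language (A ⊕ B) :=
  {w : List (A ⊕ B) | (∃ u ∈ L₁, w = u.map Sum.inl) ∨ ∃ v ∈ L₂, w = v.map Sum.inr}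

/-- `L` is an asynchronous automatic structure for `π`. -/
def IsAsyncAutomaticStructure {A G : Type*} [Group G] (π : FreeMonoid A →* G)
    (L : Language A) : Prop :=
  IsRegular L ∧ (∀ g : G, ∃ w ∈ L, evalW π w = g) ∧
    ∃ p : ℕ, ∀ u ∈ L, ∀ v ∈ L, wdist π (evalW π u) (evalW π v) ≤ 1 →
      ∃ φ ψ : ℕ → ℕ, Monotone φ ∧ Monotone ψ ∧
        Function.Surjective φ ∧ Function.Surjective ψ ∧
          ∀ t : ℕ, wdist π (evalW π (u.take (φ t))) (evalW π (v.take (ψ t))) ≤ p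

/-- `L₁` and `L₂` are equivalent automatic structures. -/
def LangEquivalent {A B G : Type*} [Group G] (π₁ : FreeMonoid A →* G)
    (π₂ : FreeMonoid B →* G) (L₁ : Language A) (L₂ : Language B) : Prop :=
  IsAsyncAutomaticStructure (sumHom π₁ π₂) (unionLang L₁ L₂)

/-- `L₁` and `L₂` are synchronously equivalent automatic structures. -/
def LangSyncEquivalent {A B G : Type*} [Group G] (π₁ : FreeMonoid A →* G)
    (π₂ : FreeMonoid B →* G) (L₁ : Language A) (L₂ : Language B) : Prop :=
  IsAutomaticStructure (sumHom π₁ π₂) (unionLang L₁ L₂)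

/-- `L` has the Hausdorff closeness property. -/
def HausClose {A G : Type*} [Group G] (π : FreeMonoid A →* G) (L : Language A) : Prop :=
  ∃ N : ℕ, ∀ u ∈ L, ∀ v ∈ L, wdist π (evalW π u) (evalW π v) ≤ 1 →
    HausdorffLE π N (Set.range fun n : ℕ => evalW π (u.take n))
      (Set.range fun n : ℕ => evalW π (v.take n))

/-- The padded alphabet `C = (A×B) ∪ (A×{$}) ∪ ({$}×B)` of convolution. -/
abbrev ConvAlphabet (A B : Type*) := (A × B) ⊕ (A ⊕ B)

/-- The convolution `u ⋄ v` of two words. -/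
def conv {A B : Type*} : List A → List B → List (ConvAlphabet A B)
  | [], [] => []
  | [], b :: v => Sum.inr (Sum.inr b) :: conv [] v
  | a :: u, [] => Sum.inr (Sum.inl a) :: conv u []
  | a :: u, b :: v => Sum.inl (a, b) :: conv u v
  termination_by u v => u.length + v.length

/-- The convolution `L₁ ⋄ L₂` of two languages. -/
def convLang {A B : Type*} (L₁ : Language A) (L₂ : Language B) :
    Language (ConvAlphabet A B) :=
  {w : List (ConvAlphabet A B) | ∃ u ∈ L₁, ∃ v ∈ L₂, w = conv u v}

/-- The natural homomorphism `C* → G × G'` for the convolution alphabet. -/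
def convHom {A B G G' : Type*} [Group G] [Group G'] (π₁ : FreeMonoid A →* G)
    (π₂ : FreeMonoid B →* G') : FreeMonoid (ConvAlphabet A B) →* G × G' :=
  FreeMonoid.lift fun c =>
    match c with
    | Sum.inl (a, b) => (π₁ (FreeMonoid.of a), π₂ (FreeMonoid.of b))
    | Sum.inr (Sum.inl a) => (π₁ (FreeMonoid.of a), 1)
    | Sum.inr (Sum.inr b) => (1, π₂ (FreeMonoid.of b))

/-- A group is automatic if it admits an automatic structure over some finite alphabet. -/
def IsAutomaticGroup (G : Type*) [Group G] : Prop :=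
  ∃ (A : Type) (_ : Fintype A) (π : FreeMonoid A →* G) (L : Language A),
    IsAutomaticStructure π L

section Helpers

variable {A G : Type*} [Group G] (π : FreeMonoid A →* G)

lemma evalW_nil : evalW π ([] : List A) = 1 := map_one π

lemma evalW_append (u v : List A) : evalW π (u ++ v) = evalW π u * evalW π v := map_mul π _ _

lemma map_prod_eq (l : List A) : (l.map fun a => π (FreeMonoid.of a)).prod = evalW π l := by
  induction l with
  | nil => simp [evalW_nil]
  | cons a t ih =>
      have : evalW π (a :: t) = π (FreeMonoid.of a) * evalW π t := by
        unfold evalW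
        rw [show FreeMonoid.ofList (a :: t) = FreeMonoid.of a * FreeMonoid.ofList t from rfl,
          map_mul]
      simp [this, ih]

lemma gens_inv {x : G} (hx : x ∈ gens π) : x⁻¹ ∈ gens π := by
  rcases hx with ⟨a, rfl⟩ | ⟨a, rfl⟩
  · exact Or.inr ⟨a, rfl⟩
  · exact Or.inl ⟨a, by simp⟩

lemma wdist_set_nonempty (hπ : Function.Surjective π) (g h : G) :
    {n : ℕ | ∃ l : List G, l.length = n ∧ (∀ x ∈ l, x ∈ gens π) ∧ l.prod = g⁻¹ * h}.Nonempty := by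
  obtain ⟨w, hw⟩ := hπ (g⁻¹ * h)
  refine ⟨(FreeMonoid.toList w).length, (FreeMonoid.toList w).map fun a => π (FreeMonoid.of a),
    by simp, ?_, ?_⟩
  · intro x hx
    simp only [List.mem_map] at hx
    obtain ⟨a, _, rfl⟩ := hx
    exact Or.inl ⟨a, rfl⟩
  · rw [map_prod_eq]
    simpa [evalW] using hw

lemma wdist_le (g h : G) (l : List G) (hl : ∀ x ∈ l, x ∈ gens π) (hp : l.prod = g⁻¹ * h) :
    wdist π g h ≤ l.length :=
  Nat.sInf_le ⟨l, rfl, hl, hp⟩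

lemma wdist_spec (hπ : Function.Surjective π) (g h : G) :
    ∃ l : List G, l.length = wdist π g h ∧ (∀ x ∈ l, x ∈ gens π) ∧ l.prod = g⁻¹ * h :=
  Nat.sInf_mem (wdist_set_nonempty π hπ g h)

lemma wdist_self (g : G) : wdist π g g = 0 :=
  Nat.le_zero.mp (wdist_le π g g [] (by simp) (by simp))

lemma wdist_triangle (hπ : Function.Surjective π) (g h k : G) :
    wdist π g k ≤ wdist π g h + wdist π h k := by
  obtain ⟨l₁, hl₁, hg₁, hp₁⟩ := wdist_spec π hπ g h
  obtain ⟨l₂, hl₂, hg₂, hp₂⟩ := wdist_spec π hπ h k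
  have := wdist_le π g k (l₁ ++ l₂) (by
    intro x hx; rcases List.mem_append.mp hx with h | h
    exacts [hg₁ x h, hg₂ x h]) (by rw [List.prod_append, hp₁, hp₂]; group)
  simpa [hl₁, hl₂] using this

lemma wdist_symm (hπ : Function.Surjective π) (g h : G) : wdist π g h = wdist π h g := by
  have key : ∀ x y : G, wdist π x y ≤ wdist π y x := by
    intro x y
    obtain ⟨l, hl, hg, hp⟩ := wdist_spec π hπ y x
    have := wdist_le π x y ((l.map fun z => z⁻¹).reverse) (by
      intro z hz
      simp only [List.mem_reverse, List.mem_map] at hz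
      obtain ⟨w, hw, rfl⟩ := hz
      exact gens_inv π (hg w hw)) (by
      rw [← List.prod_inv_reverse, hp]; group)
    simpa [hl] using this
  exact le_antisymm (key g h) (key h g)

lemma wdist_left_inv (x g h : G) : wdist π (x * g) (x * h) = wdist π g h := by
  unfold wdist
  congr 1
  ext n
  constructor <;> rintro ⟨l, h1, h2, h3⟩ <;> exact ⟨l, h1, h2, by rw [h3]; group⟩

lemma wdist_mul_eval (g : G) (v : List A) : wdist π g (g * evalW π v) ≤ v.length := by
  have := wdist_le π g (g * evalW π v) (v.map fun a => π (FreeMonoid.of a)) (by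
    intro x hx
    simp only [List.mem_map] at hx
    obtain ⟨a, _, rfl⟩ := hx
    exact Or.inl ⟨a, rfl⟩) (by rw [map_prod_eq]; group)
  simpa using this

lemma wdist_take_add (w : List A) (m k : ℕ) :
    wdist π (evalW π (w.take m)) (evalW π (w.take (m + k))) ≤ k := by
  have h1 : w.take (m + k) = w.take m ++ (w.drop m).take k := by
    rw [← List.take_add]
  rw [h1, evalW_append]
  exact le_trans (wdist_mul_eval π _ _) (by simp)

lemma wdist_take_take (hπ : Function.Surjective π) (w : List A) (m m' : ℕ) :
    wdist π (evalW π (w.take m)) (evalW π (w.take m')) ≤ (m' - m) + (m - m') := by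
  rcases le_total m m' with h | h
  · have := wdist_take_add π w m (m' - m)
    rw [Nat.add_sub_cancel' h] at this
    omega
  · have := wdist_take_add π w m' (m - m')
    rw [Nat.add_sub_cancel' h, wdist_symm π hπ] at this
    omega

end Helpers


end Auto

open Auto

/-- If `L` is an automatic structure admitting a departure function, then for
every `p > 0` there is `q > 0` such that whenever `u₁u₂` and `u₃` are `p`-MFT with
`u₁,u₂,u₃ ∈ L`, any representatives `u'ᵢ ∈ L` of the same elements satisfy
`d_A((u'₁u'₂)^[n]π, u'₃^[n]π) ≤ q` for all `n`. -/
theorem representatives_fellow_travel {A G : Type*} [Fintype A] [Group G]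
    (π : FreeMonoid A →* G) (hπ : Function.Surjective π)
    (L : Language A) (hL : IsAutomaticStructure π L)
    (D : ℝ≥0 → ℝ≥0) (hD : IsDepartureFunction π L D)
    (p : ℝ≥0) (hp : 0 < p) :
    ∃ q : ℝ≥0, 0 < q ∧ ∀ u₁ ∈ L, ∀ u₂ ∈ L, ∀ u₃ ∈ L,
      MFT π p (u₁ ++ u₂) u₃ →
      ∀ u₁' ∈ L, ∀ u₂' ∈ L, ∀ u₃' ∈ L,
        evalW π u₁' = evalW π u₁ → evalW π u₂' = evalW π u₂ →
          evalW π u₃' = evalW π u₃ →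
        ∀ n : ℕ,
          (wdist π (evalW π ((u₁' ++ u₂').take n)) (evalW π (u₃'.take n)) : ℝ≥0) ≤ q := by
  obtain ⟨N, hN⟩ := hL.ft
  set K := Nat.ceil (D (N : ℝ≥0)) with hKdef
  -- fellow travelling of L-words with the same value, in ℕ
  have hFT : ∀ u ∈ L, ∀ v ∈ L, evalW π u = evalW π v →
      ∀ n, wdist π (evalW π (u.take n)) (evalW π (v.take n)) ≤ N := by
    intro u hu v hv he n
    have h0 : wdist π (evalW π u) (evalW π v) ≤ 1 := by
      rw [he, wdist_self]; exact Nat.zero_le 1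
    exact_mod_cast hN u hu v hv h0 n
  -- length comparison for L-words with the same value
  have hlen : ∀ u ∈ L, ∀ v ∈ L, evalW π u = evalW π v → v.length ≤ u.length + K := by
    intro u hu v hv he
    by_contra hcon
    push_neg at hcon
    set t := v.length - u.length with ht
    have h1 : D (N : ℝ≥0) ≤ (t : ℝ≥0) := by
      refine le_trans (Nat.le_ceil _) ?_
      exact_mod_cast (by omega : K ≤ t)
    have h2 : u.length + t ≤ v.length := by omega
    have h3 := hD v hv N u.length t h1 h2
    have e1 : v.take (u.length + t) = v := by
      rw [show u.length + t = v.length by omega]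
      exact List.take_length
    rw [e1] at h3
    have h4 : wdist π (evalW π (v.take u.length)) (evalW π v) ≤ N := by
      rw [wdist_symm π hπ, ← he]
      have := hFT u hu v hv he u.length
      rwa [(List.take_length : u.take u.length = u)] at this
    have h5 : ((N : ℕ) : ℝ≥0) < ((N : ℕ) : ℝ≥0) :=
      lt_of_lt_of_le h3 (by exact_mod_cast h4)
    exact lt_irrefl _ h5
  -- main claim: representatives of a two-piece product fellow travel the original
  have claimC : ∀ u₁ ∈ L, ∀ u₂ ∈ L, ∀ u₁' ∈ L, ∀ u₂' ∈ L,
      evalW π u₁' = evalW π u₁ → evalW π u₂' = evalW π u₂ → ∀ n : ℕ,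
      wdist π (evalW π ((u₁' ++ u₂').take n)) (evalW π ((u₁ ++ u₂).take n)) ≤ N + 2 * K := by
    intro u₁ hu₁ u₂ hu₂ u₁' hu₁' u₂' hu₂' he₁ he₂ n
    have ha1 : u₁'.length ≤ u₁.length + K := hlen u₁ hu₁ u₁' hu₁' he₁.symm
    have ha2 : u₁.length ≤ u₁'.length + K := hlen u₁' hu₁' u₁ hu₁ he₁
    rw [List.take_append, List.take_append,
      evalW_append, evalW_append]
    rcases le_or_gt n u₁'.length with hn | hn
    · -- n ≤ |u₁'|
      have e2 : u₂'.take (n - u₁'.length) = [] := by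
        rw [show n - u₁'.length = 0 by omega]; rfl
      rw [e2, evalW_nil, mul_one]
      have t1 : wdist π (evalW π (u₁'.take n)) (evalW π (u₁.take n)) ≤ N := by
        rw [wdist_symm π hπ]
        exact hFT u₁ hu₁ u₁' hu₁' he₁.symm n
      have t2 : wdist π (evalW π (u₁.take n))
          (evalW π (u₁.take n) * evalW π (u₂.take (n - u₁.length))) ≤ K := by
        refine le_trans (wdist_mul_eval π _ _) ?_
        have : (u₂.take (n - u₁.length)).length ≤ n - u₁.length := by
          simp
        omega
      have t3 := wdist_triangle π hπ (evalW π (u₁'.take n)) (evalW π (u₁.take n))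
        (evalW π (u₁.take n) * evalW π (u₂.take (n - u₁.length)))
      omega
    · -- n > |u₁'|
      have e3 : u₁'.take n = u₁' := List.take_of_length_le (by omega)
      rw [e3, he₁]
      rcases le_or_gt u₁.length n with hna | hna
      · -- |u₁| ≤ n as well
        have e4 : u₁.take n = u₁ := List.take_of_length_le hna
        rw [e4, wdist_left_inv]
        have t1 : wdist π (evalW π (u₂'.take (n - u₁'.length)))
            (evalW π (u₂.take (n - u₁'.length))) ≤ N := by
          rw [wdist_symm π hπ]
          exact hFT u₂ hu₂ u₂' hu₂' he₂.symm _
        have t2 := wdist_take_take π hπ u₂ (n - u₁'.length) (n - u₁.length)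
        have t3 := wdist_triangle π hπ (evalW π (u₂'.take (n - u₁'.length)))
          (evalW π (u₂.take (n - u₁'.length))) (evalW π (u₂.take (n - u₁.length)))
        omega
      · -- |u₁'| < n < |u₁|
        have e5 : u₂.take (n - u₁.length) = [] := by
          rw [show n - u₁.length = 0 by omega]; rfl
        rw [e5, evalW_nil, mul_one]
        have e6 : u₁.take u₁.length = u₁ := List.take_length
        have t1 : wdist π (evalW π (u₁.take n)) (evalW π u₁) ≤ u₁.length - n := by
          have := wdist_take_take π hπ u₁ n u₁.length
          rw [e6] at this
          omega
        have t2 : wdist π (evalW π u₁)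
            (evalW π u₁ * evalW π (u₂'.take (n - u₁'.length))) ≤ n - u₁'.length := by
          refine le_trans (wdist_mul_eval π _ _) ?_
          simp
        have t3 := wdist_triangle π hπ (evalW π (u₁.take n)) (evalW π u₁)
          (evalW π u₁ * evalW π (u₂'.take (n - u₁'.length)))
        rw [wdist_symm π hπ]
        omega
  refine ⟨p + ((N + N + 2 * K : ℕ) : ℝ≥0), lt_of_lt_of_le hp le_self_add, ?_⟩
  intro u₁ hu₁ u₂ hu₂ u₃ hu₃ hmft u₁' hu₁' u₂' hu₂' u₃' hu₃' he₁ he₂ he₃ n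
  have A := claimC u₁ hu₁ u₂ hu₂ u₁' hu₁' u₂' hu₂' he₁ he₂ n
  have B := hmft.1 n
  have C' : wdist π (evalW π (u₃.take n)) (evalW π (u₃'.take n)) ≤ N :=
    hFT u₃ hu₃ u₃' hu₃' he₃.symm n
  have T1 := wdist_triangle π hπ (evalW π ((u₁' ++ u₂').take n))
    (evalW π ((u₁ ++ u₂).take n)) (evalW π (u₃'.take n))
  have T2 := wdist_triangle π hπ (evalW π ((u₁ ++ u₂).take n))
    (evalW π (u₃.take n)) (evalW π (u₃'.take n))
  calc (wdist π (evalW π ((u₁' ++ u₂').take n)) (evalW π (u₃'.take n)) : ℝ≥0)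
      ≤ (wdist π (evalW π ((u₁' ++ u₂').take n)) (evalW π ((u₁ ++ u₂).take n)) : ℝ≥0)
        + (wdist π (evalW π ((u₁ ++ u₂).take n)) (evalW π (u₃'.take n)) : ℝ≥0) := by
        exact_mod_cast T1
    _ ≤ (wdist π (evalW π ((u₁' ++ u₂').take n)) (evalW π ((u₁ ++ u₂).take n)) : ℝ≥0)
        + ((wdist π (evalW π ((u₁ ++ u₂).take n)) (evalW π (u₃.take n)) : ℝ≥0)
          + (wdist π (evalW π (u₃.take n)) (evalW π (u₃'.take n)) : ℝ≥0)) := by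
        gcongr
        exact_mod_cast T2
    _ ≤ ((N + 2 * K : ℕ) : ℝ≥0) + (p + ((N : ℕ) : ℝ≥0)) := by
        refine add_le_add ?_ (add_le_add B ?_)
        · exact_mod_cast A
        · exact_mod_cast C'
    _ = p + ((N + N + 2 * K : ℕ) : ℝ≥0) := by
        push_cast
        ring
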